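/- If for a sample i the InfoNCE term -log( exp(⟨u_i, v_i⟩/σ) / Σ_{j=1}^N exp(⟨u_i, v_j⟩/σ) ) is at most η, then for every j ≠ i, ⟨u_i, v_i⟩ - ⟨u_i, v_j⟩ ≥ -σ·log(e^η - 1), i.e. small contrastive loss forces the positive-pair similarity to dominate all negative-pair similarities by an explicit margin. -/
import Mathlib


open scoped RealInnerProductSpace BigOperators

/-- Small per-sample InfoNCE loss forces the positive-pair similarity to dominate
every negative-pair similarity by an explicit margin `-σ·log(e^η - 1)`. -/
theorem stmt6 {k N : ℕ} (hN : 2 ≤ N)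
    (u v : Fin N → EuclideanSpace ℝ (Fin k))
    (hu : ∀ i, ‖u i‖ = 1) (hv : ∀ j, ‖v j‖ = 1)
    (σ : ℝ) (hσ : 0 < σ) (η : ℝ) (hη : 0 < η) (i : Fin N)
    (hloss : -Real.log (Real.exp (⟪u i, v i⟫ / σ) /
        ∑ j, Real.exp (⟪u i, v j⟫ / σ)) ≤ η) :
    ∀ j : Fin N, j ≠ i →
      ⟪u i, v i⟫ - ⟪u i, v j⟫ ≥ -σ * Real.log (Real.exp η - 1) := by
  intro j hj
  set a : Fin N → ℝ := fun j => ⟪u i, v j⟫ / σ with ha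
  set S : ℝ := ∑ j, Real.exp (a j) with hS
  have hSpos : 0 < S := Finset.sum_pos (fun j _ => Real.exp_pos _) ⟨i, Finset.mem_univ i⟩
  have hquot : 0 < Real.exp (a i) / S := div_pos (Real.exp_pos _) hSpos
  have h1 : Real.log S - a i ≤ η := by
    have := hloss
    rw [Real.log_div (Real.exp_pos _).ne' hSpos.ne', Real.log_exp] at this
    linarith
  have h2 : S ≤ Real.exp η * Real.exp (a i) := by
    have : Real.log S ≤ η + a i := by linarith
    calc S = Real.exp (Real.log S) := (Real.exp_log hSpos).symm
      _ ≤ Real.exp (η + a i) := Real.exp_le_exp.mpr this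
      _ = Real.exp η * Real.exp (a i) := Real.exp_add _ _
  have h3 : Real.exp (a j) + Real.exp (a i) ≤ S := by
    have : ∑ x ∈ ({j, i} : Finset (Fin N)), Real.exp (a x) ≤ S :=
      Finset.sum_le_sum_of_subset_of_nonneg (Finset.subset_univ _)
        (fun _ _ _ => (Real.exp_pos _).le)
    rwa [Finset.sum_pair hj] at this
  have h4 : Real.exp (a j) ≤ (Real.exp η - 1) * Real.exp (a i) := by nlinarith
  have hpos : 0 < Real.exp η - 1 := by
    have : (1:ℝ) < Real.exp η := Real.one_lt_exp_iff.mpr hη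
    linarith
  have h5 : a j ≤ Real.log (Real.exp η - 1) + a i := by
    have := Real.log_le_log (Real.exp_pos (a j)) h4
    rwa [Real.log_exp, Real.log_mul hpos.ne' (Real.exp_pos _).ne', Real.log_exp] at this
  have h6 : a i - a j ≥ -Real.log (Real.exp η - 1) := by linarith
  have : (⟪u i, v i⟫ - ⟪u i, v j⟫) / σ ≥ -Real.log (Real.exp η - 1) := by
    simpa [ha, sub_div] using h6
  have h7 := mul_le_mul_of_nonneg_left this hσ.le
  rw [mul_div_cancel₀ _ hσ.ne'] at h7
  linarith
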